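/- arXiv:2003.13667 — 3 statements merged into one kernel-verified Lean document; each statement's English description precedes it below -/
import Mathlib

section
/- Useful bits identity for Scheme 1: for N ≥ 2, 1 ≤ j ≤ K, and nonnegative integers υ_1 ≥ ... ≥ υ_K, the quantity N υ_j + ∑_{t=2}^{j} ( N(N−1)^{t−1} υ_j binom(j−1, t−1) + ∑_{i=j+1}^K N(N−1)^{t−1} υ_i binom(i−2, t−2) ) + ∑_{t=j+1}^{K} ∑_{i=t}^{K} N(N−1)^{t−1} υ_i binom(i−2, t−2) equals N^j υ_j + (N−1) ∑_{i=j+1}^K N^{i−1} υ_i. -/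
open Finset

lemma binom_sum_aux (N n : ℕ) (hN : 1 ≤ N) :
    ∑ s ∈ range (n + 1), (N - 1) ^ s * Nat.choose n s = N ^ n := by
  conv_rhs => rw [← Nat.sub_add_cancel hN, add_pow]
  simp

/-- Useful bits identity for semantic PIR Scheme 1. -/
theorem scheme1_useful_bits (N K j : ℕ) (hN : 2 ≤ N) (hj1 : 1 ≤ j) (hjK : j ≤ K)
    (υ : ℕ → ℕ) (hmono : ∀ i i' : ℕ, i ≤ i' → υ i' ≤ υ i) :
    N * υ j
      + (∑ t ∈ Icc 2 j, (N * (N - 1) ^ (t - 1) * υ j * Nat.choose (j - 1) (t - 1)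
          + ∑ i ∈ Icc (j + 1) K, N * (N - 1) ^ (t - 1) * υ i * Nat.choose (i - 2) (t - 2)))
      + ∑ t ∈ Icc (j + 1) K, ∑ i ∈ Icc t K,
          N * (N - 1) ^ (t - 1) * υ i * Nat.choose (i - 2) (t - 2)
    = N ^ j * υ j + (N - 1) * ∑ i ∈ Icc (j + 1) K, N ^ (i - 1) * υ i := by
  have hN1 : 1 ≤ N := by omega
  rw [Finset.sum_add_distrib]
  -- Part A
  have hA : N * υ j + ∑ t ∈ Icc 2 j, N * (N - 1) ^ (t - 1) * υ j * Nat.choose (j - 1) (t - 1)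
      = N ^ j * υ j := by
    have h1 : ∑ t ∈ Icc 2 j, N * (N - 1) ^ (t - 1) * υ j * Nat.choose (j - 1) (t - 1)
        = ∑ s ∈ range (j - 1), N * (N - 1) ^ (s + 1) * υ j * Nat.choose (j - 1) (s + 1) := by
      rw [← Finset.Ico_add_one_right_eq_Icc, Finset.sum_Ico_eq_sum_range]
      have hh : j + 1 - 2 = j - 1 := by omega
      rw [hh]
      refine Finset.sum_congr rfl fun s _ => ?_
      have h2 : 2 + s - 1 = s + 1 := by omega
      have h3 : 2 + s - 2 = s := by omega
      rw [h2]
    rw [h1]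
    have h4 : N * υ j + ∑ s ∈ range (j - 1), N * (N - 1) ^ (s + 1) * υ j * Nat.choose (j - 1) (s + 1)
        = ∑ s ∈ range ((j - 1) + 1), N * (N - 1) ^ s * υ j * Nat.choose (j - 1) s := by
      rw [Finset.sum_range_succ']
      simp [add_comm]
    rw [h4]
    have h5 : ∑ s ∈ range ((j - 1) + 1), N * (N - 1) ^ s * υ j * Nat.choose (j - 1) s
        = N * υ j * ∑ s ∈ range ((j - 1) + 1), (N - 1) ^ s * Nat.choose (j - 1) s := by
      rw [Finset.mul_sum]
      refine Finset.sum_congr rfl fun s _ => ?_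
      ring
    rw [h5, binom_sum_aux N (j - 1) hN1]
    have : N * N ^ (j - 1) = N ^ j := by
      rw [← pow_succ']
      congr 1; omega
    rw [mul_right_comm, this]
  -- Part B : combine the double sums
  have hB : (∑ t ∈ Icc 2 j, ∑ i ∈ Icc (j + 1) K,
        N * (N - 1) ^ (t - 1) * υ i * Nat.choose (i - 2) (t - 2))
      + ∑ t ∈ Icc (j + 1) K, ∑ i ∈ Icc t K,
        N * (N - 1) ^ (t - 1) * υ i * Nat.choose (i - 2) (t - 2)
      = (N - 1) * ∑ i ∈ Icc (j + 1) K, N ^ (i - 1) * υ i := by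
    rw [Finset.sum_comm]
    have hswap : (∑ t ∈ Icc (j + 1) K, ∑ i ∈ Icc t K,
          N * (N - 1) ^ (t - 1) * υ i * Nat.choose (i - 2) (t - 2))
        = ∑ i ∈ Icc (j + 1) K, ∑ t ∈ Icc (j + 1) i,
          N * (N - 1) ^ (t - 1) * υ i * Nat.choose (i - 2) (t - 2) := by
      exact Finset.sum_comm' (fun t i => by simp only [Finset.mem_Icc]; omega)
    rw [hswap, ← Finset.sum_add_distrib, Finset.mul_sum]
    refine Finset.sum_congr rfl fun i hi => ?_
    simp only [Finset.mem_Icc] at hi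
    have hij : j + 1 ≤ i := hi.1
    -- merge Icc 2 j and Icc (j+1) i
    have hmerge : (∑ t ∈ Icc 2 j, N * (N - 1) ^ (t - 1) * υ i * Nat.choose (i - 2) (t - 2))
        + ∑ t ∈ Icc (j + 1) i, N * (N - 1) ^ (t - 1) * υ i * Nat.choose (i - 2) (t - 2)
        = ∑ t ∈ Icc 2 i, N * (N - 1) ^ (t - 1) * υ i * Nat.choose (i - 2) (t - 2) := by
      have e1 : Icc 2 j = Ioc 1 j := by rw [← Finset.Icc_add_one_left_eq_Ioc]; rfl
      have e2 : Icc (j + 1) i = Ioc j i := by rw [← Finset.Icc_add_one_left_eq_Ioc]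
      have e3 : Icc 2 i = Ioc 1 i := by rw [← Finset.Icc_add_one_left_eq_Ioc]; rfl
      rw [e1, e2, e3, Finset.sum_Ioc_consecutive _ (by omega) (by omega)]
    rw [hmerge]
    have h1 : ∑ t ∈ Icc 2 i, N * (N - 1) ^ (t - 1) * υ i * Nat.choose (i - 2) (t - 2)
        = ∑ s ∈ range ((i - 2) + 1), N * (N - 1) ^ (s + 1) * υ i * Nat.choose (i - 2) s := by
      rw [← Finset.Ico_add_one_right_eq_Icc, Finset.sum_Ico_eq_sum_range]
      have hh : i + 1 - 2 = (i - 2) + 1 := by omega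
      rw [hh]
      refine Finset.sum_congr rfl fun s _ => ?_
      have h2 : 2 + s - 1 = s + 1 := by omega
      have h3 : 2 + s - 2 = s := by omega
      rw [h2, h3]
    rw [h1]
    have h5 : ∑ s ∈ range ((i - 2) + 1), N * (N - 1) ^ (s + 1) * υ i * Nat.choose (i - 2) s
        = N * (N - 1) * υ i * ∑ s ∈ range ((i - 2) + 1), (N - 1) ^ s * Nat.choose (i - 2) s := by
      rw [Finset.mul_sum]
      refine Finset.sum_congr rfl fun s _ => ?_
      ring
    rw [h5, binom_sum_aux N (i - 2) hN1]
    have h6 : N * N ^ (i - 2) = N ^ (i - 1) := by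
      rw [← pow_succ']
      congr 1; omega
    calc N * (N - 1) * υ i * N ^ (i - 2)
        = (N - 1) * ((N * N ^ (i - 2)) * υ i) := by ring
      _ = (N - 1) * (N ^ (i - 1) * υ i) := by rw [h6]
  omega
end

section
/- Expected download for Scheme 2: for N ≥ 2, K ≥ 1, and nonnegative reals L_1,...,L_K, (1/N^{K−1}) ∑_{t=1}^{K} ∑_{j=1}^{K−t+1} L_j (N−1)^{t−1} binom(K−j, t−1) = ∑_{j=1}^{K} L_j N^{−(j−1)}. -/
open Finset

/-- Expected download identity for semantic PIR Scheme 2. -/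
theorem scheme2_expected_download (N K : ℕ) (hN : 2 ≤ N) (hK : 1 ≤ K)
    (L : ℕ → ℝ) (hL : ∀ j, 0 ≤ L j) :
    (1 / (N : ℝ) ^ (K - 1)) *
        ∑ t ∈ Icc 1 K, ∑ j ∈ Icc 1 (K - t + 1),
          L j * ((N : ℝ) - 1) ^ (t - 1) * (Nat.choose (K - j) (t - 1) : ℝ)
      = ∑ j ∈ Icc 1 K, L j / (N : ℝ) ^ (j - 1) := by
  have hNpos : (0:ℝ) < (N:ℝ) := by
    have : (2:ℝ) ≤ (N:ℝ) := by exact_mod_cast hN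
    linarith
  have hswap : ∑ t ∈ Icc 1 K, ∑ j ∈ Icc 1 (K - t + 1),
      L j * ((N : ℝ) - 1) ^ (t - 1) * (Nat.choose (K - j) (t - 1) : ℝ)
      = ∑ j ∈ Icc 1 K, ∑ t ∈ Icc 1 (K - j + 1),
      L j * ((N : ℝ) - 1) ^ (t - 1) * (Nat.choose (K - j) (t - 1) : ℝ) := by
    apply Finset.sum_comm'
    intro t j
    simp only [mem_Icc]
    omega
  rw [hswap]
  have hinner : ∀ j ∈ Icc 1 K, ∑ t ∈ Icc 1 (K - j + 1),
      L j * ((N : ℝ) - 1) ^ (t - 1) * (Nat.choose (K - j) (t - 1) : ℝ)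
      = L j * (N:ℝ) ^ (K - j) := by
    intro j hj
    rw [← Finset.Ico_add_one_right_eq_Icc, Finset.sum_Ico_eq_sum_range]
    have hrange : K - j + 1 + 1 - 1 = K - j + 1 := by omega
    rw [hrange]
    have step : ∀ i, L j * ((N : ℝ) - 1) ^ (1 + i - 1) * (Nat.choose (K - j) (1 + i - 1) : ℝ)
        = L j * (((N : ℝ) - 1) ^ i * (Nat.choose (K - j) i : ℝ)) := by
      intro i
      have : 1 + i - 1 = i := by omega
      rw [this, mul_assoc]
    rw [Finset.sum_congr rfl (fun i _ => step i), ← Finset.mul_sum]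
    congr 1
    have hb := add_pow ((N:ℝ) - 1) 1 (K - j)
    simp only [sub_add_cancel, one_pow, mul_one] at hb
    rw [hb]
  rw [Finset.sum_congr rfl hinner, Finset.mul_sum]
  apply Finset.sum_congr rfl
  intro j hj
  simp only [mem_Icc] at hj
  have hKj : K - 1 = (K - j) + (j - 1) := by omega
  rw [hKj, pow_add]
  have h1 : (N:ℝ) ^ (K - j) ≠ 0 := by positivity
  have h2 : (N:ℝ) ^ (j - 1) ≠ 0 := by positivity
  field_simp
end

section
/- Converse bound: under the correctness constraint H(W_i | A_1^{[i]},...,A_N^{[i]}, Q_1^{[i]},...,Q_N^{[i]}) = 0, the privacy constraint that answers for different message indices are identically distributed, and independence of messages with H(W_i) = L_i, any semantic PIR scheme satisfies E[D] ≥ L_{i_1} + L_{i_2}/N + ... + L_{i_K}/N^{K−1} for every permutation (i_1,...,i_K) of (1,...,K), where E[D] = ∑_n H(A_n^{[i]}) (independent of i). -/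
open Finset

/-- The random variables appearing in a semantic PIR scheme with `N` databases
and `K` messages: the messages `W i`, the queries `Q n i` and the answers
`A n i` (query/answer of database `n` when the user desires message `i`). -/
inductive PIRVar (N K : ℕ) : Type
  | W : Fin K → PIRVar N K
  | Q : Fin N → Fin K → PIRVar N K
  | A : Fin N → Fin K → PIRVar N K
  deriving DecidableEq

namespace PIRAux

variable {N K : ℕ}

def WS (N : ℕ) {K : ℕ} (S : Finset (Fin K)) : Finset (PIRVar N K) := S.image PIRVar.W
def QS (N : ℕ) {K : ℕ} (i : Fin K) : Finset (PIRVar N K) :=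
  (univ : Finset (Fin N)).image fun n => PIRVar.Q n i
def AS (N : ℕ) {K : ℕ} (i : Fin K) : Finset (PIRVar N K) :=
  (univ : Finset (Fin N)).image fun n => PIRVar.A n i

/-- conditional download `H(A_{1:N}^{[i]} | Q_{1:N}^{[i]}, W_S)`. -/
def gE (H : Finset (PIRVar N K) → ℝ) (i : Fin K) (S : Finset (Fin K)) : ℝ :=
  H (AS N i ∪ (QS N i ∪ WS N S)) - H (QS N i ∪ WS N S)

variable (H : Finset (PIRVar N K) → ℝ)

lemma key (hmono : ∀ S T : Finset (PIRVar N K), S ⊆ T → H S ≤ H T)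
    (hsub : ∀ S T : Finset (PIRVar N K), H (S ∪ T) + H (S ∩ T) ≤ H S + H T)
    {X Y X' Y' : Finset (PIRVar N K)} (h1 : X' ⊆ X ∪ Y) (h2 : Y' ⊆ X ∩ Y) :
    H X' + H Y' ≤ H X + H Y :=
  le_trans (add_le_add (hmono _ _ h1) (hmono _ _ h2)) (hsub X Y)

lemma condMono (hmono : ∀ S T : Finset (PIRVar N K), S ⊆ T → H S ≤ H T)
    (hsub : ∀ S T : Finset (PIRVar N K), H (S ∪ T) + H (S ∩ T) ≤ H S + H T)
    {A T T' : Finset (PIRVar N K)} (h : T' ⊆ T) :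
    H (A ∪ T) - H T ≤ H (A ∪ T') - H T' := by
  have hk := key H hmono hsub (X := A ∪ T') (Y := T) (X' := A ∪ T) (Y' := T')
    (by intro x hx; simp only [mem_union] at hx ⊢
        rcases hx with hx | hx
        · exact Or.inl (Or.inl hx)
        · exact Or.inr hx)
    (by intro x hx; simp only [mem_inter, mem_union]
        exact ⟨Or.inr hx, h hx⟩)
  linarith

lemma subadd (hmono : ∀ S T : Finset (PIRVar N K), S ⊆ T → H S ≤ H T)
    (hsub : ∀ S T : Finset (PIRVar N K), H (S ∪ T) + H (S ∩ T) ≤ H S + H T)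
    (f : Fin N → PIRVar N K) (C : Finset (PIRVar N K)) (T : Finset (Fin N)) :
    H (T.image f ∪ C) - H C ≤ ∑ n ∈ T, (H ({f n} ∪ C) - H C) := by
  induction T using Finset.induction_on with
  | empty => simp
  | @insert a T ha ih =>
    rw [Finset.image_insert, Finset.sum_insert ha]
    have hk := key H hmono hsub (X := {f a} ∪ C) (Y := T.image f ∪ C)
      (X' := insert (f a) (T.image f) ∪ C) (Y' := C)
      (by intro x hx
          simp only [mem_union, mem_insert, mem_singleton] at hx ⊢
          rcases hx with (hx | hx) | hx
          · exact Or.inl (Or.inl hx)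
          · exact Or.inr (Or.inl hx)
          · exact Or.inl (Or.inr hx))
      (by intro x hx; simp only [mem_inter, mem_union]; exact ⟨Or.inr hx, Or.inr hx⟩)
    linarith

lemma perdb (hmono : ∀ S T : Finset (PIRVar N K), S ⊆ T → H S ≤ H T)
    (hsub : ∀ S T : Finset (PIRVar N K), H (S ∪ T) + H (S ∩ T) ≤ H S + H T)
    (hqindep : ∀ (i : Fin K) (T : Finset (Fin N)) (S : Finset (Fin K)),
      H (S.image PIRVar.W ∪ T.image (fun n => PIRVar.Q n i))
        = H (S.image PIRVar.W) + H (T.image (fun n => PIRVar.Q n i)))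
    (hdet : ∀ (n : Fin N) (i : Fin K),
      H (insert (PIRVar.A n i)
          (insert (PIRVar.Q n i) ((univ : Finset (Fin K)).image PIRVar.W)))
        = H (insert (PIRVar.Q n i) ((univ : Finset (Fin K)).image PIRVar.W)))
    (n : Fin N) (i : Fin K) (S : Finset (Fin K)) :
    H ({PIRVar.A n i} ∪ ({PIRVar.Q n i} ∪ WS N S)) - H ({PIRVar.Q n i} ∪ WS N S)
      ≤ H ({PIRVar.A n i} ∪ (QS N i ∪ WS N S)) - H (QS N i ∪ WS N S) := by
  have hqmem : PIRVar.Q n i ∈ QS N i := by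
    simp only [QS, mem_image]; exact ⟨n, mem_univ n, rfl⟩
  have hWsub : WS N S ⊆ WS N (univ : Finset (Fin K)) :=
    Finset.image_subset_image (subset_univ S)
  have k1 := key H hmono hsub
      (X := {PIRVar.A n i} ∪ ({PIRVar.Q n i} ∪ WS N (univ : Finset (Fin K))))
      (Y := {PIRVar.A n i} ∪ (QS N i ∪ WS N S))
      (X' := {PIRVar.A n i} ∪ (QS N i ∪ WS N (univ : Finset (Fin K))))
      (Y' := {PIRVar.A n i} ∪ ({PIRVar.Q n i} ∪ WS N S))
      (by intro x hx; simp only [mem_union] at hx ⊢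
          rcases hx with hx | hx | hx
          · exact Or.inl (Or.inl hx)
          · exact Or.inr (Or.inr (Or.inl hx))
          · exact Or.inl (Or.inr (Or.inr hx)))
      (by intro x hx; simp only [mem_union] at hx
          simp only [mem_inter, mem_union]
          rcases hx with hx | hx | hx
          · exact ⟨Or.inl hx, Or.inl hx⟩
          · refine ⟨Or.inr (Or.inl hx), Or.inr (Or.inl ?_)⟩
            rw [mem_singleton] at hx; rw [hx]; exact hqmem
          · exact ⟨Or.inr (Or.inr (hWsub hx)), Or.inr (Or.inr hx)⟩)
  have d1 := hdet n i
  simp only [Finset.insert_eq] at d1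
  have m1 : H (QS N i ∪ WS N (univ : Finset (Fin K)))
      ≤ H ({PIRVar.A n i} ∪ (QS N i ∪ WS N (univ : Finset (Fin K)))) :=
    hmono _ _ subset_union_right
  have e1 := hqindep i {n} (univ : Finset (Fin K))
  have e2 := hqindep i (univ : Finset (Fin N)) (univ : Finset (Fin K))
  have e3 := hqindep i {n} S
  have e4 := hqindep i (univ : Finset (Fin N)) S
  simp only [Finset.image_singleton] at e1 e3
  rw [union_comm] at e1 e2 e3 e4
  simp only [WS, QS] at *
  linarith

end PIRAux

open PIRAux

/-- Converse bound for semantic PIR. `H` is the joint Shannon entropy of a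
set of the system's random variables, assumed to satisfy the polymatroid
axioms (normalized, monotone, submodular) together with the constraints of a
semantic PIR scheme: independent messages of entropies `L i`, queries
independent of messages, deterministic answers, correctness, and privacy.
Then the (index-independent) download cost `D = ∑ₙ H(Aₙ)` satisfies
`D ≥ ∑ₖ L_{i_k} / N^{k-1}` for every permutation `(i_1, …, i_K)`. -/
theorem semantic_pir_converse (N K : ℕ) (hN : 1 ≤ N) (hK : 1 ≤ K)
    (L : Fin K → ℝ) (hL : ∀ i, 0 ≤ L i)
    (H : Finset (PIRVar N K) → ℝ)
    -- polymatroid (Shannon) axioms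
    (hH0 : H ∅ = 0)
    (hmono : ∀ S T : Finset (PIRVar N K), S ⊆ T → H S ≤ H T)
    (hsub : ∀ S T : Finset (PIRVar N K), H (S ∪ T) + H (S ∩ T) ≤ H S + H T)
    -- messages are independent with `H(W i) = L i`
    (hmsg : ∀ S : Finset (Fin K), H (S.image PIRVar.W) = ∑ i ∈ S, L i)
    -- queries are independent of the messages
    (hqindep : ∀ (i : Fin K) (T : Finset (Fin N)) (S : Finset (Fin K)),
      H (S.image PIRVar.W ∪ T.image (fun n => PIRVar.Q n i))
        = H (S.image PIRVar.W) + H (T.image (fun n => PIRVar.Q n i)))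
    -- answers are deterministic functions of all messages and the query
    (hdet : ∀ (n : Fin N) (i : Fin K),
      H (insert (PIRVar.A n i)
          (insert (PIRVar.Q n i) ((univ : Finset (Fin K)).image PIRVar.W)))
        = H (insert (PIRVar.Q n i) ((univ : Finset (Fin K)).image PIRVar.W)))
    -- correctness: the desired message is determined by all queries and answers
    (hcorrect : ∀ i : Fin K,
      H (insert (PIRVar.W i)
          ((univ : Finset (Fin N)).image (fun n => PIRVar.Q n i)
            ∪ (univ : Finset (Fin N)).image (fun n => PIRVar.A n i)))
        = H ((univ : Finset (Fin N)).image (fun n => PIRVar.Q n i)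
            ∪ (univ : Finset (Fin N)).image (fun n => PIRVar.A n i)))
    -- privacy: `H(Aₙ^[i] | Qₙ^[i], W_S) = H(Aₙ^[j] | Qₙ^[j], W_S)` for all `S`
    (hpriv : ∀ (n : Fin N) (i j : Fin K) (S : Finset (Fin K)),
      H (insert (PIRVar.A n i) (insert (PIRVar.Q n i) (S.image PIRVar.W)))
          - H (insert (PIRVar.Q n i) (S.image PIRVar.W))
        = H (insert (PIRVar.A n j) (insert (PIRVar.Q n j) (S.image PIRVar.W)))
          - H (insert (PIRVar.Q n j) (S.image PIRVar.W)))
    -- privacy: the marginal answer entropies do not depend on the index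
    (hansmarg : ∀ (n : Fin N) (i j : Fin K),
      H {PIRVar.A n i} = H {PIRVar.A n j})
    -- the download cost, independent of the desired index by privacy
    (D : ℝ) (hD : ∀ i : Fin K, D = ∑ n : Fin N, H {PIRVar.A n i}) :
    ∀ σ : Equiv.Perm (Fin K),
      D ≥ ∑ k : Fin K, L (σ k) / (N : ℝ) ^ (k : ℕ) := by
  intro σ
  have hKpos : 0 < K := hK
  have hNpos : (0:ℝ) < N := by exact_mod_cast lt_of_lt_of_le one_pos (by exact_mod_cast hN)
  -- nonnegativity of gE
  have hgnn : ∀ (i : Fin K) (S : Finset (Fin K)), 0 ≤ gE H i S := by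
    intro i S
    have := hmono (QS N i ∪ WS N S) (AS N i ∪ (QS N i ∪ WS N S)) subset_union_right
    simp only [gE]; linarith
  -- switching lemma
  have hswitch : ∀ (i j : Fin K) (S : Finset (Fin K)), gE H j S ≤ (N:ℝ) * gE H i S := by
    intro i j S
    have hn : ∀ n : Fin N,
        H ({PIRVar.A n j} ∪ (QS N j ∪ WS N S)) - H (QS N j ∪ WS N S) ≤ gE H i S := by
      intro n
      have hsub1 : ({PIRVar.Q n j} : Finset (PIRVar N K)) ∪ WS N S ⊆ QS N j ∪ WS N S := by
        apply Finset.union_subset_union_left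
        rw [Finset.singleton_subset_iff]
        simp only [QS, Finset.mem_image]; exact ⟨n, Finset.mem_univ n, rfl⟩
      have s1 := condMono H hmono hsub (A := {PIRVar.A n j}) hsub1
      have hp := hpriv n j i S
      simp only [Finset.insert_eq] at hp
      have s2 := perdb H hmono hsub hqindep hdet n i S
      have s3 : H ({PIRVar.A n i} ∪ (QS N i ∪ WS N S)) ≤ H (AS N i ∪ (QS N i ∪ WS N S)) := by
        apply hmono
        apply Finset.union_subset_union_left
        rw [Finset.singleton_subset_iff]
        simp only [AS, Finset.mem_image]; exact ⟨n, Finset.mem_univ n, rfl⟩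
      simp only [gE, WS, QS, AS] at s1 s2 s3 ⊢
      linarith
    have hs := subadd H hmono hsub (fun n => PIRVar.A n j) (QS N j ∪ WS N S) univ
    have hb : gE H j S
        ≤ ∑ n : Fin N, (H ({PIRVar.A n j} ∪ (QS N j ∪ WS N S)) - H (QS N j ∪ WS N S)) := hs
    have hc : ∑ n : Fin N, (H ({PIRVar.A n j} ∪ (QS N j ∪ WS N S)) - H (QS N j ∪ WS N S))
        ≤ ∑ _n : Fin N, gE H i S := Finset.sum_le_sum (fun n _ => hn n)
    have hd' : ∑ _n : Fin N, gE H i S = (N:ℝ) * gE H i S := by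
      rw [Finset.sum_const, Finset.card_univ, Fintype.card_fin, nsmul_eq_mul]
    linarith
  -- extraction lemma
  have hextract : ∀ (i : Fin K) (S : Finset (Fin K)), i ∉ S →
      L i + gE H i (insert i S) ≤ gE H i S := by
    intro i S hiS
    have himg : ((insert i S).image PIRVar.W : Finset (PIRVar N K))
        = {PIRVar.W i} ∪ S.image PIRVar.W := by
      rw [Finset.image_insert, Finset.insert_eq]
    have a1 := hqindep i (univ : Finset (Fin N)) (insert i S)
    have a2 := hqindep i (univ : Finset (Fin N)) S
    have b1 := hmsg (insert i S)
    have b2 := hmsg S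
    rw [Finset.sum_insert hiS] at b1
    rw [himg] at a1 b1
    have hcor := hcorrect i
    simp only [Finset.insert_eq] at hcor
    have cm := condMono H hmono hsub (A := {PIRVar.W i})
        (T := (univ : Finset (Fin N)).image (fun n => PIRVar.A n i)
            ∪ ((univ : Finset (Fin N)).image (fun n => PIRVar.Q n i) ∪ S.image PIRVar.W))
        (T' := (univ : Finset (Fin N)).image (fun n => PIRVar.Q n i)
            ∪ (univ : Finset (Fin N)).image (fun n => PIRVar.A n i))
        (by intro x hx; simp only [mem_union] at hx ⊢; tauto)
    simp only [gE, WS, QS, AS, himg]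
    simp only [Finset.union_assoc, Finset.union_comm, Finset.union_left_comm] at cm hcor a1 a2 b1 b2 ⊢
    linarith
  -- start lemma
  have hstart : ∀ i : Fin K, gE H i ∅ ≤ D := by
    intro i
    rw [hD i]
    have hs := subadd H hmono hsub (fun n => PIRVar.A n i) (QS N i ∪ WS N ∅) univ
    have hb : ∀ n : Fin N,
        H ({PIRVar.A n i} ∪ (QS N i ∪ WS N ∅)) - H (QS N i ∪ WS N ∅)
          ≤ H {PIRVar.A n i} := by
      intro n
      have hk := key H hmono hsub (X := ({PIRVar.A n i} : Finset (PIRVar N K)))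
        (Y := QS N i ∪ WS N ∅)
        (X' := {PIRVar.A n i} ∪ (QS N i ∪ WS N ∅)) (Y' := (∅ : Finset (PIRVar N K)))
        (Finset.Subset.refl _) (Finset.empty_subset _)
      rw [hH0] at hk; linarith
    have hb2 : gE H i ∅
        ≤ ∑ n : Fin N, (H ({PIRVar.A n i} ∪ (QS N i ∪ WS N ∅)) - H (QS N i ∪ WS N ∅)) := hs
    have hb3 := Finset.sum_le_sum (fun n (_ : n ∈ (univ : Finset (Fin N))) => hb n)
    calc gE H i ∅ ≤ _ := hb2
      _ ≤ ∑ n : Fin N, H {PIRVar.A n i} := hb3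
  -- the descending chain
  set τ : ℕ → Fin K := fun t => σ ⟨t % K, Nat.mod_lt t hKpos⟩ with hτ
  have hτeq : ∀ (t : ℕ) (h : t < K), τ t = σ ⟨t, h⟩ := by
    intro t h
    simp only [hτ]
    congr 1
    exact Fin.ext (by simp [Nat.mod_eq_of_lt h])
  have hτnotmem : ∀ m, m < K → τ m ∉ (Finset.range m).image τ := by
    intro m hm hmem
    obtain ⟨k, hk, hkeq⟩ := Finset.mem_image.mp hmem
    rw [Finset.mem_range] at hk
    have h2 := σ.injective hkeq
    have h3 : k % K = m % K := congrArg Fin.val h2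
    rw [Nat.mod_eq_of_lt (lt_trans hk hm), Nat.mod_eq_of_lt hm] at h3
    omega
  have aux : ∀ d m, m + d + 1 = K →
      ∑ k ∈ Finset.range (d+1), L (τ (m+k)) / (N:ℝ)^k
        ≤ gE H (τ m) ((Finset.range m).image τ) := by
    intro d
    induction d with
    | zero =>
      intro m hm
      rw [Finset.sum_range_one]
      simp only [Nat.add_zero, pow_zero, div_one]
      have he := hextract (τ m) ((Finset.range m).image τ) (hτnotmem m (by omega))
      have hg := hgnn (τ m) (insert (τ m) ((Finset.range m).image τ))
      linarith
    | succ d ih =>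
      intro m hm
      have hS : insert (τ m) ((Finset.range m).image τ)
          = (Finset.range (m+1)).image τ := by
        rw [Finset.range_add_one, Finset.image_insert]
      have h1 := hextract (τ m) ((Finset.range m).image τ) (hτnotmem m (by omega))
      rw [hS] at h1
      have h2 := hswitch (τ m) (τ (m+1)) ((Finset.range (m+1)).image τ)
      have h3 := ih (m+1) (by omega)
      rw [Finset.sum_range_succ']
      simp only [Nat.add_zero, pow_zero, div_one]
      have hsum : ∑ k ∈ Finset.range (d+1), L (τ (m+(k+1))) / (N:ℝ)^(k+1)
          = (∑ k ∈ Finset.range (d+1), L (τ (m+1+k)) / (N:ℝ)^k) / N := by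
        rw [Finset.sum_div]
        apply Finset.sum_congr rfl
        intro k _
        have hmk : m + (k+1) = m+1+k := by omega
        rw [hmk, pow_succ, ← div_div]
      rw [hsum]
      have h4 : (∑ k ∈ Finset.range (d+1), L (τ (m+1+k)) / (N:ℝ)^k) / N
          ≤ gE H (τ m) ((Finset.range (m+1)).image τ) := by
        rw [div_le_iff₀ hNpos]
        calc ∑ k ∈ Finset.range (d+1), L (τ (m+1+k)) / (N:ℝ)^k
            ≤ gE H (τ (m+1)) ((Finset.range (m+1)).image τ) := h3
          _ ≤ (N:ℝ) * gE H (τ m) ((Finset.range (m+1)).image τ) := h2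
          _ = gE H (τ m) ((Finset.range (m+1)).image τ) * N := mul_comm _ _
      linarith
  have hfin := aux (K-1) 0 (by omega)
  have hKK : K - 1 + 1 = K := by omega
  rw [hKK] at hfin
  simp only [Nat.zero_add, Finset.range_zero, Finset.image_empty] at hfin
  have hst := hstart (τ 0)
  rw [ge_iff_le]
  have hconv : ∑ k : Fin K, L (σ k) / (N:ℝ)^(k:ℕ)
      = ∑ k ∈ Finset.range K, L (τ k) / (N:ℝ)^k := by
    rw [← Fin.sum_univ_eq_sum_range (fun k => L (τ k) / (N:ℝ)^k) K]
    apply Finset.sum_congr rfl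
    intro k _
    rw [hτeq k k.isLt]
  rw [hconv]
  linarith
end
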